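/- arXiv:1104.1538 — 7 statements merged into one kernel-verified Lean document; each statement's English description precedes it below -/
import Mathlib

section
/- Let B be a finite set and V = ℝ^B with the pointwise partial order and the standard inner product ⟨v,w⟩ = ∑_{b∈B} v(b)·w(b). Let 𝒜 ⊆ V be a finite set of points all of whose coordinates are nonnegative, let w : 𝒜 → ℝ, and let E = {x ∈ V : ⟨a,x⟩ ≥ −w(a) for all a ∈ 𝒜}. If E is bounded from below (i.e., there is M ∈ ℝ with x(b) ≥ M for all x ∈ E and b ∈ B), then a point x ∈ E is a minimal element of E with respect to the pointwise partial order if and only if there do not exist r ∈ V with r ≠ 0 and ⟨a,r⟩ ≥ 0 for all a ∈ 𝒜, and λ > 0, such that x − λ·r ∈ E. -/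
/-- Lemma 2.1 (minimal elements of the envelope):
If the envelope `E` of a positive point configuration `𝒜` with weight `w`
is bounded from below, then `x ∈ E` is minimal (w.r.t. the pointwise
partial order) iff there is no nonzero ray `r` of `E` and `λ > 0` with
`x - λ • r ∈ E`. -/
theorem stmt_0 {B : Type*} [Fintype B] (𝒜 : Finset (B → ℝ))
    (hpos : ∀ a ∈ 𝒜, ∀ b : B, 0 ≤ a b)
    (w : (B → ℝ) → ℝ)
    (E : Set (B → ℝ))
    (hE : E = {x : B → ℝ | ∀ a ∈ 𝒜, -w a ≤ ∑ b : B, a b * x b})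
    (hbdd : ∃ M : ℝ, ∀ x ∈ E, ∀ b : B, M ≤ x b)
    (x : B → ℝ) (hx : x ∈ E) :
    (∀ y ∈ E, y ≤ x → y = x) ↔
      ¬ ∃ (r : B → ℝ) (lam : ℝ), r ≠ 0 ∧ (∀ a ∈ 𝒜, 0 ≤ ∑ b : B, a b * r b) ∧
        0 < lam ∧ x - lam • r ∈ E := by
  constructor
  · rintro hmin ⟨r, lam, hr0, hray, hlam, hy⟩
    set y := x - lam • r with hydef
    obtain ⟨M, hM⟩ := hbdd
    -- y + t • r ∈ E for all t ≥ 0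
    have hmem : ∀ t : ℝ, 0 ≤ t → y + t • r ∈ E := by
      intro t ht
      rw [hE] at hy ⊢
      intro a ha
      have h1 := hy a ha
      have h2 := hray a ha
      have : ∑ b : B, a b * (y + t • r) b
          = (∑ b : B, a b * y b) + t * ∑ b : B, a b * r b := by
        rw [Finset.mul_sum, ← Finset.sum_add_distrib]
        refine Finset.sum_congr rfl fun b _ => ?_
        simp [Pi.add_apply, Pi.smul_apply, smul_eq_mul]; ring
      rw [this]
      nlinarith
    -- hence r ≥ 0 pointwise
    have hrnn : ∀ b : B, 0 ≤ r b := by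
      intro b
      by_contra hb
      push_neg at hb
      set t := (M - 1 - y b) / r b with htdef
      have hyb : M ≤ y b := hM y hy b
      have ht : 0 ≤ t := div_nonneg_of_nonpos (by linarith) hb.le
      have h := hM _ (hmem t ht) b
      have : (y + t • r) b = y b + t * r b := rfl
      rw [this, htdef, div_mul_cancel₀ _ (ne_of_lt hb)] at h
      linarith
    -- y ≤ x
    have hle : y ≤ x := by
      intro b
      have : 0 ≤ lam * r b := mul_nonneg hlam.le (hrnn b)
      simp only [hydef, Pi.sub_apply, Pi.smul_apply, smul_eq_mul]
      linarith
    have := hmin y hy hle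
    apply hr0
    have hxy : lam • r = 0 := by
      have : x - lam • r = x := this
      funext b
      have := congrFun this b
      simp only [Pi.sub_apply] at this
      simpa using sub_eq_self.mp this
    have := smul_eq_zero.mp hxy
    rcases this with h | h
    · exact absurd h (ne_of_gt hlam)
    · exact h
  · intro h y hy hle
    by_contra hne
    apply h
    refine ⟨x - y, 1, sub_ne_zero.mpr (fun hh => hne hh.symm), ?_, one_pos, ?_⟩
    · intro a ha
      apply Finset.sum_nonneg
      intro b _
      exact mul_nonneg (hpos a ha b) (by simpa using sub_nonneg.mpr (hle b))
    · simpa using hy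
end

section
/- Let X and Y be disjoint finite sets with |X| ≥ 2 and |Y| ≥ 2, and let A be a nonempty proper subset of X and B a nonempty proper subset of Y. Let B̄(X,Y) = {e_x + e_y : x ∈ X, y ∈ Y} ⊆ ℝ^{X∪Y}, and define g : ℝ^{X∪Y} → ℝ by g(f) = ∑_{i∈A} f(i) − ∑_{j∈B} f(j). Then: (i) there exists a point f in the relative (intrinsic) interior of the convex hull of B̄(X,Y) with g(f) = 0; and (ii) for all x, x' ∈ X and y, y' ∈ Y with x = x' or y = y', it is not the case that g(e_x + e_y) > 0 and g(e_{x'} + e_{y'}) < 0. (Together these say that the hyperplane ∑_{i∈A} f(i) = ∑_{j∈B} f(j) meets the relative interior of conv B̄(X,Y) and does not separate the endpoints of any edge of the point configuration B̄(X,Y), i.e., it defines a split of B̄(X,Y).) -/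
open Set

lemma combo_mem_intrinsicInterior {V : Type*} [NormedAddCommGroup V] [NormedSpace ℝ V]
    {s : Set V} (hs : Convex ℝ s) {x v : V}
    (hx : x ∈ intrinsicInterior ℝ s) (hv : v ∈ s) {t : ℝ} (ht : 0 < t) (ht1 : t ≤ 1) :
    t • x + (1 - t) • v ∈ intrinsicInterior ℝ s := by
  rw [mem_intrinsicInterior] at hx ⊢
  obtain ⟨u0, hu, hux⟩ := hx
  have hvS : v ∈ affineSpan ℝ s := subset_affineSpan ℝ s hv
  have hmemF : ∀ z : affineSpan ℝ s, t • (z : V) + (1 - t) • v ∈ affineSpan ℝ s := by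
    intro z
    have : t • (z : V) + (1 - t) • v = t • ((z : V) -ᵥ v) +ᵥ v := by
      simp only [vsub_eq_sub, vadd_eq_add]; module
    rw [this]
    exact (affineSpan ℝ s).smul_vsub_vadd_mem t z.2 hvS hvS
  have hmemG : ∀ z : affineSpan ℝ s, t⁻¹ • ((z : V) - (1 - t) • v) ∈ affineSpan ℝ s := by
    intro z
    have ht0 : (t : ℝ) ≠ 0 := ne_of_gt ht
    have : t⁻¹ • ((z : V) - (1 - t) • v) = t⁻¹ • ((z : V) -ᵥ v) +ᵥ v := by
      simp only [vsub_eq_sub, vadd_eq_add]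
      match_scalars <;> field_simp <;> ring
    rw [this]
    exact (affineSpan ℝ s).smul_vsub_vadd_mem t⁻¹ z.2 hvS hvS
  have ht0 : (t : ℝ) ≠ 0 := ne_of_gt ht
  let F : affineSpan ℝ s ≃ₜ affineSpan ℝ s :=
    { toFun := fun z => ⟨t • (z : V) + (1 - t) • v, hmemF z⟩
      invFun := fun z => ⟨t⁻¹ • ((z : V) - (1 - t) • v), hmemG z⟩
      left_inv := by
        intro z; ext
        simp only []
        rw [add_sub_cancel_right, smul_smul, inv_mul_cancel₀ ht0, one_smul]
      right_inv := by
        intro z; ext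
        simp only []
        rw [smul_smul, mul_inv_cancel₀ ht0, one_smul, sub_add_cancel]
      continuous_toFun := by
        apply Continuous.subtype_mk
        exact (continuous_subtype_val.const_smul t).add continuous_const
      continuous_invFun := by
        apply Continuous.subtype_mk
        exact ((continuous_subtype_val.sub continuous_const).const_smul t⁻¹) }
  set T : Set (affineSpan ℝ s) := ((↑) ⁻¹' s : Set (affineSpan ℝ s)) with hT
  have hFT : F '' T ⊆ T := by
    rintro _ ⟨z, hz, rfl⟩
    exact hs hz hv (le_of_lt ht) (by linarith) (by ring)
  refine ⟨F u0, ?_, ?_⟩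
  · have h1 : F u0 ∈ interior (⇑F '' T) := by
      rw [← F.image_interior]; exact ⟨u0, hu, rfl⟩
    exact interior_mono hFT h1
  · show t • (u0 : V) + (1 - t) • v = t • x + (1 - t) • v
    rw [hux]

/-- Splits of the product of two simplices `B̄(X,Y)`:
for nonempty proper `A ⊊ X`, `B ⊊ Y`, the hyperplane
`∑_{i∈A} f(i) = ∑_{j∈B} f(j)` meets the relative interior of
`conv B̄(X,Y)` and does not separate the endpoints of any edge of the
configuration, i.e. it defines a split of `B̄(X,Y)`. -/
theorem stmt_2 {X Y : Type*} [Fintype X] [Fintype Y] [DecidableEq X] [DecidableEq Y]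
    (hX : 2 ≤ Fintype.card X) (hY : 2 ≤ Fintype.card Y)
    (A : Finset X) (B : Finset Y)
    (hA : A.Nonempty) (hA' : A ≠ Finset.univ)
    (hB : B.Nonempty) (hB' : B ≠ Finset.univ) :
    let e : X ⊕ Y → ((X ⊕ Y) → ℝ) := fun z => Pi.single z 1
    let cfg : Set ((X ⊕ Y) → ℝ) :=
      {f | ∃ (x : X) (y : Y), f = e (Sum.inl x) + e (Sum.inr y)}
    let g : ((X ⊕ Y) → ℝ) → ℝ :=
      fun f => (∑ i ∈ A, f (Sum.inl i)) - ∑ j ∈ B, f (Sum.inr j)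
    (∃ f ∈ intrinsicInterior ℝ (convexHull ℝ cfg), g f = 0) ∧
      (∀ (x x' : X) (y y' : Y), (x = x' ∨ y = y') →
        ¬ (0 < g (e (Sum.inl x) + e (Sum.inr y)) ∧
            g (e (Sum.inl x') + e (Sum.inr y')) < 0)) := by
  intro e cfg g
  -- value of g on vertices
  have hgval : ∀ (x : X) (y : Y), g (e (Sum.inl x) + e (Sum.inr y)) =
      (if x ∈ A then (1:ℝ) else 0) - (if y ∈ B then (1:ℝ) else 0) := by
    intro x y
    have h1 : (∑ i ∈ A, (e (Sum.inl x) + e (Sum.inr y)) (Sum.inl i))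
        = (if x ∈ A then (1:ℝ) else 0) := by
      simp only [e, Pi.add_apply, Pi.single_apply]
      rw [Finset.sum_add_distrib]
      simp [Sum.inl.injEq, Finset.sum_ite_eq]
    have h2 : (∑ j ∈ B, (e (Sum.inl x) + e (Sum.inr y)) (Sum.inr j))
        = (if y ∈ B then (1:ℝ) else 0) := by
      simp only [e, Pi.add_apply, Pi.single_apply]
      rw [Finset.sum_add_distrib]
      simp [Sum.inr.injEq, Finset.sum_ite_eq]
    simp only [g, h1, h2]
  -- linearity of g
  have hglin : ∀ (a b : ℝ) (p q : (X ⊕ Y) → ℝ),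
      g (a • p + b • q) = a * g p + b * g q := by
    intro a b p q
    simp only [g, Pi.add_apply, Pi.smul_apply, smul_eq_mul, Finset.sum_add_distrib,
      ← Finset.mul_sum]
    ring
  obtain ⟨x1, hx1⟩ := hA
  obtain ⟨y1, hy1⟩ := hB
  obtain ⟨x0, hx0⟩ : ∃ x0, x0 ∉ A := by
    by_contra h; push_neg at h; exact hA' (Finset.eq_univ_iff_forall.2 h)
  obtain ⟨y0, hy0⟩ : ∃ y0, y0 ∉ B := by
    by_contra h; push_neg at h; exact hB' (Finset.eq_univ_iff_forall.2 h)
  constructor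
  · -- existence of interior point on the hyperplane
    have hconv : Convex ℝ (convexHull ℝ cfg) := convex_convexHull ℝ cfg
    have hne : (convexHull ℝ cfg).Nonempty :=
      ⟨e (Sum.inl x1) + e (Sum.inr y1),
        subset_convexHull ℝ cfg ⟨x1, y1, rfl⟩⟩
    obtain ⟨f1, hf1⟩ := hne.intrinsicInterior hconv
    rcases lt_trichotomy (g f1) 0 with hlt | heq | hgt
    · -- use vertex with g = 1 : x1 ∈ A, y0 ∉ B
      set v := e (Sum.inl x1) + e (Sum.inr y0) with hv
      have hgv : g v = 1 := by rw [hgval]; simp [hx1, hy0]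
      have hvs : v ∈ convexHull ℝ cfg := subset_convexHull ℝ cfg ⟨x1, y0, rfl⟩
      set t : ℝ := 1 / (1 - g f1) with htdef
      have hden : 0 < 1 - g f1 := by linarith
      have ht : 0 < t := by positivity
      have ht1 : t ≤ 1 := by
        rw [htdef, div_le_one hden]; linarith
      refine ⟨t • f1 + (1 - t) • v, combo_mem_intrinsicInterior hconv hf1 hvs ht ht1, ?_⟩
      rw [hglin, hgv, htdef]
      field_simp
      ring
    · exact ⟨f1, hf1, heq⟩
    · -- use vertex with g = -1 : x0 ∉ A, y1 ∈ B
      set v := e (Sum.inl x0) + e (Sum.inr y1) with hv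
      have hgv : g v = -1 := by rw [hgval]; simp [hx0, hy1]
      have hvs : v ∈ convexHull ℝ cfg := subset_convexHull ℝ cfg ⟨x0, y1, rfl⟩
      set t : ℝ := 1 / (g f1 + 1) with htdef
      have hden : 0 < g f1 + 1 := by linarith
      have ht : 0 < t := by positivity
      have ht1 : t ≤ 1 := by
        rw [htdef, div_le_one hden]; linarith
      refine ⟨t • f1 + (1 - t) • v, combo_mem_intrinsicInterior hconv hf1 hvs ht ht1, ?_⟩
      rw [hglin, hgv, htdef]
      field_simp
      ring
  · -- edges are not separated
    rintro x x' y y' (rfl | rfl) ⟨h1, h2⟩ <;>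
      rw [hgval] at h1 h2 <;> split_ifs at h1 h2 <;> linarith
end

section
/- Let X be a finite set and D : X × X → ℝ any symmetric function. Then there exist a distance d on X (i.e., a symmetric map d : X × X → ℝ with d(x,y) ≥ 0 for all x,y and d(x,x) = 0 for all x) and a vector v : X → ℝ such that T_D = T_d + v, where for a symmetric map E : X × X → ℝ, T_E is the set of minimal elements of P_E = {f : X → ℝ : f(x) + f(y) ≥ E(x,y) for all x, y ∈ X} with respect to the pointwise partial order. -/
/-- Corollary 4.4: for every symmetric map `D : X × X → ℝ` there exist a
distance `d` on `X` and a vector `v ∈ ℝ^X` such that `T_D = T_d + v`. -/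
theorem stmt_7 {X : Type*} [Fintype X] (D : X → X → ℝ)
    (hsym : ∀ x y, D x y = D y x) :
    let P : (X → X → ℝ) → Set (X → ℝ) :=
      fun E => {f | ∀ x y, E x y ≤ f x + f y}
    let T : (X → X → ℝ) → Set (X → ℝ) :=
      fun E => {f | f ∈ P E ∧ ∀ g ∈ P E, g ≤ f → g = f}
    ∃ (d : X → X → ℝ) (v : X → ℝ),
      (∀ x y, d x y = d y x) ∧ (∀ x y, 0 ≤ d x y) ∧ (∀ x, d x x = 0) ∧
        T D = (fun f => f + v) '' T d := by
  intro P T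
  set v : X → ℝ := fun x => D x x / 2 with hv
  set d : X → X → ℝ := fun x y => max (D x y - v x - v y) 0 with hd
  -- the shift correspondence between the polyhedra
  have hPiff : ∀ f : X → ℝ, f ∈ P D ↔ (f - v) ∈ P d := by
    intro f
    constructor
    · intro hf x y
      have h1 : D x y ≤ f x + f y := hf x y
      have hx : v x ≤ f x := by have := hf x x; simp only [hv]; linarith
      have hy : v y ≤ f y := by have := hf y y; simp only [hv]; linarith
      simp only [hd, Pi.sub_apply]
      apply max_le <;> linarith
    · intro hf x y
      have h1 := hf x y
      simp only [hd, Pi.sub_apply] at h1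
      have h2 : D x y - v x - v y ≤ max (D x y - v x - v y) 0 := le_max_left _ _
      linarith
  refine ⟨d, v, ?_, ?_, ?_, ?_⟩
  · intro x y; simp only [hd, hsym x y]; ring_nf
  · intro x y; exact le_max_right _ _
  · intro x; simp only [hd, hv]; norm_num
  · ext f
    constructor
    · rintro ⟨hfP, hfmin⟩
      refine ⟨f - v, ⟨(hPiff f).1 hfP, ?_⟩, by funext x; simp⟩
      intro g hg hgle
      have hgP : g + v ∈ P D := by
        rw [hPiff]
        simpa using hg
      have h2 : g + v ≤ f := fun x => by have := hgle x; simp at this ⊢; linarith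
      have := hfmin (g + v) hgP h2
      funext x
      have := congrFun this x
      simp at this ⊢
      linarith
    · rintro ⟨g, ⟨hgP, hgmin⟩, rfl⟩
      refine ⟨(hPiff (g + v)).2 (by simpa using hgP), ?_⟩
      intro h hh hle
      have hhP : h - v ∈ P d := (hPiff h).1 hh
      have h2 : h - v ≤ g := fun x => by have := hle x; simp at this ⊢; linarith
      have := hgmin (h - v) hhP h2
      funext x
      have := congrFun this x
      simp at this ⊢
      linarith
end

section
/- Let Y be a finite set and D a symmetric map assigning a real number to each pair of nonempty subsets of Y, satisfying (A1) D(A,B) + D(B,C) ≥ D(A,C) for all nonempty A, B, C ⊆ Y, (A2) D({x},{x}) = 0 for all x ∈ Y, and (A3) D(A,B) = ½ D(A∪B, A∪B) for all nonempty A ≠ B. Define δ(D) : 𝒫(Y) → ℝ by δ(D)(A) = ½ D(A,A) for nonempty A and δ(D)(∅) = 0. Then δ(D) is a diversity on Y, i.e., δ(D)(A∪B) + δ(D)(B∪C) ≥ δ(D)(A∪C) for all A, C ⊆ Y and nonempty B ⊆ Y, and δ(D)(A) = 0 whenever |A| ≤ 1. -/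
/-- Proposition 6.2(b): if `D` is a symmetric map on pairs of nonempty subsets
of `Y` satisfying (A1)--(A3), then `δ(D)` is a diversity on `Y`. -/
theorem stmt_11 {Y : Type*} [Fintype Y] [DecidableEq Y]
    (D : Finset Y → Finset Y → ℝ)
    (hsym : ∀ A B : Finset Y, A.Nonempty → B.Nonempty → D A B = D B A)
    (hA1 : ∀ A B C : Finset Y, A.Nonempty → B.Nonempty → C.Nonempty →
      D A C ≤ D A B + D B C)
    (hA2 : ∀ x : Y, D {x} {x} = 0)
    (hA3 : ∀ A B : Finset Y, A.Nonempty → B.Nonempty → A ≠ B →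
      D A B = D (A ∪ B) (A ∪ B) / 2) :
    let δD : Finset Y → ℝ := fun A => if A = ∅ then 0 else D A A / 2
    (∀ A C B : Finset Y, B.Nonempty → δD (A ∪ C) ≤ δD (A ∪ B) + δD (B ∪ C)) ∧
      (∀ A : Finset Y, A.card ≤ 1 → δD A = 0) := by
  intro δD
  -- nonnegativity of D X X
  have hnn : ∀ X : Finset Y, X.Nonempty → 0 ≤ D X X := by
    intro X hX
    have := hA1 X X X hX hX hX
    linarith
  -- monotonicity: D X X ≤ D (X ∪ Z) (X ∪ Z)
  have hmono : ∀ X Z : Finset Y, X.Nonempty → Z.Nonempty →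
      D X X ≤ D (X ∪ Z) (X ∪ Z) := by
    intro X Z hX hZ
    by_cases h : Z = X
    · subst h; simp
    · have h1 := hA1 X Z X hX hZ hX
      have h2 : D X Z = D (X ∪ Z) (X ∪ Z) / 2 := hA3 X Z hX hZ (fun e => h e.symm)
      have h3 : D Z X = D X Z := hsym Z X hZ hX
      linarith
  have hδ : ∀ X : Finset Y, X.Nonempty → δD X = D X X / 2 := by
    intro X hX
    simp only [δD, if_neg hX.ne_empty]
  have hδnn : ∀ X : Finset Y, 0 ≤ δD X := by
    intro X
    by_cases h : X = ∅
    · simp [δD, h]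
    · rw [hδ X (Finset.nonempty_iff_ne_empty.mpr h)]
      have := hnn X (Finset.nonempty_iff_ne_empty.mpr h)
      linarith
  constructor
  · intro A C B hB
    by_cases hA : A = ∅
    · subst hA
      by_cases hC : C = ∅
      · subst hC
        simp only [Finset.empty_union, Finset.union_empty, δD, if_pos rfl]
        have := hδnn B
        linarith [hδnn B]
      · have hC' : C.Nonempty := Finset.nonempty_iff_ne_empty.mpr hC
        rw [Finset.empty_union, hδ C hC', hδ (B ∪ C) (hB.mono Finset.subset_union_left)]
        have h1 : D C C ≤ D (C ∪ B) (C ∪ B) := hmono C B hC' hB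
        rw [Finset.union_comm C B] at h1
        have := hδnn (∅ ∪ B)
        linarith
    · have hA' : A.Nonempty := Finset.nonempty_iff_ne_empty.mpr hA
      by_cases hC : C = ∅
      · subst hC
        rw [Finset.union_empty, hδ A hA', hδ (A ∪ B) (hA'.mono Finset.subset_union_left)]
        have h1 : D A A ≤ D (A ∪ B) (A ∪ B) := hmono A B hA' hB
        have := hδnn (B ∪ ∅)
        linarith
      · -- main case: A, B, C all nonempty
        have hC' : C.Nonempty := Finset.nonempty_iff_ne_empty.mpr hC
        have hAC : (A ∪ C).Nonempty := hA'.mono Finset.subset_union_left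
        have hAB : (A ∪ B).Nonempty := hA'.mono Finset.subset_union_left
        have hBC : (B ∪ C).Nonempty := hB.mono Finset.subset_union_left
        rw [hδ _ hAC, hδ _ hAB, hδ _ hBC]
        set U : Finset Y := A ∪ B ∪ C with hU
        have hUeq : (A ∪ C) ∪ B = U := by
          ext x; simp only [hU, Finset.mem_union]; tauto
        have hUne : U.Nonempty := by
          rw [← hUeq]; exact hAC.mono Finset.subset_union_left
        have step1 : D (A ∪ C) (A ∪ C) ≤ D U U := by
          have := hmono (A ∪ C) B hAC hB
          rwa [hUeq] at this
        -- now show D U U ≤ D (A ∪ B) (A ∪ B) + D (B ∪ C) (B ∪ C)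
        have step2 : D U U ≤ D (A ∪ B) (A ∪ B) + D (B ∪ C) (B ∪ C) := by
          by_cases h1 : A ∪ B = B
          · -- A ⊆ B, so U = B ∪ C
            have hU2 : U = B ∪ C := by
              ext x
              have := Finset.ext_iff.mp h1 x
              simp only [hU, Finset.mem_union] at *
              tauto
            rw [hU2]
            have := hnn (A ∪ B) hAB
            linarith
          · by_cases h2 : B ∪ C = B
            · have hU2 : U = A ∪ B := by
                ext x
                have := Finset.ext_iff.mp h2 x
                simp only [hU, Finset.mem_union] at *
                tauto
              rw [hU2]
              have := hnn (B ∪ C) hBC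
              linarith
            · by_cases h3 : A ∪ B = B ∪ C
              · have hU2 : U = A ∪ B := by
                  ext x
                  have := Finset.ext_iff.mp h3 x
                  simp only [hU, Finset.mem_union] at *
                  tauto
                rw [hU2]
                have := hnn (B ∪ C) hBC
                linarith
              · have t := hA1 (A ∪ B) B (B ∪ C) hAB hB hBC
                have e1 : D (A ∪ B) (B ∪ C) = D U U / 2 := by
                  have := hA3 (A ∪ B) (B ∪ C) hAB hBC h3
                  have hU3 : (A ∪ B) ∪ (B ∪ C) = U := by
                    ext x; simp only [hU, Finset.mem_union]; tauto
                  rwa [hU3] at this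
                have e2 : D (A ∪ B) B = D (A ∪ B) (A ∪ B) / 2 := by
                  have := hA3 (A ∪ B) B hAB hB h1
                  have hU3 : (A ∪ B) ∪ B = A ∪ B := by
                    ext x; simp only [Finset.mem_union]; tauto
                  rwa [hU3] at this
                have e3 : D B (B ∪ C) = D (B ∪ C) (B ∪ C) / 2 := by
                  have h2' : B ≠ B ∪ C := fun e => h2 e.symm
                  have := hA3 B (B ∪ C) hB hBC h2'
                  have hU3 : B ∪ (B ∪ C) = B ∪ C := by
                    ext x; simp only [Finset.mem_union]; tauto
                  rwa [hU3] at this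
                rw [e1, e2, e3] at t
                linarith
        linarith
  · intro A hcard
    interval_cases h : A.card
    · rw [Finset.card_eq_zero] at h
      simp [δD, h]
    · rw [Finset.card_eq_one] at h
      obtain ⟨x, rfl⟩ := h
      simp [δD, hA2 x, Finset.singleton_ne_empty]
end

section
/- Let Y be a finite set. The map δ ↦ D_δ, where D_δ(A,B) = 2δ(A) if A = B and D_δ(A,B) = δ(A∪B) if A ≠ B (for nonempty A, B ⊆ Y), is a bijection from the set of diversities on Y onto the set of symmetric maps D on pairs of nonempty subsets of Y satisfying (A1) D(A,B) + D(B,C) ≥ D(A,C) for all nonempty A, B, C ⊆ Y, (A2) D({x},{x}) = 0 for all x ∈ Y, and (A3) D(A,B) = ½ D(A∪B, A∪B) for all nonempty A ≠ B. -/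
section Aux

variable {Y : Type*} [DecidableEq Y]

lemma div_nonneg' {δ : Finset Y → ℝ}
    (h1 : ∀ A C B : Finset Y, B.Nonempty → δ (A ∪ C) ≤ δ (A ∪ B) + δ (B ∪ C))
    (h2 : ∀ A : Finset Y, A.card ≤ 1 → δ A = 0) (A : Finset Y) : 0 ≤ δ A := by
  rcases A.eq_empty_or_nonempty with h | h
  · rw [h, h2 ∅ (by simp)]
  · have := h1 A A A h
    simp only [Finset.union_self] at this
    linarith

lemma div_mono' {δ : Finset Y → ℝ}
    (h1 : ∀ A C B : Finset Y, B.Nonempty → δ (A ∪ C) ≤ δ (A ∪ B) + δ (B ∪ C))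
    (h2 : ∀ A : Finset Y, A.card ≤ 1 → δ A = 0) {A B : Finset Y} (hAB : A ⊆ B) :
    δ A ≤ δ B := by
  have key : ∀ (S T : Finset Y), δ T ≤ δ (T ∪ S) := by
    intro S
    induction S using Finset.induction_on with
    | empty => intro T; simp
    | @insert a S ha ih =>
      intro T
      have step : δ (T ∪ S) ≤ δ (T ∪ S ∪ {a}) := by
        have := h1 ∅ (T ∪ S) {a} (Finset.singleton_nonempty a)
        have hsing : δ ({a} : Finset Y) = 0 := h2 _ (by simp)
        simp only [Finset.empty_union] at this
        rw [hsing, Finset.union_comm {a} (T ∪ S)] at this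
        linarith
      have heq : T ∪ S ∪ {a} = T ∪ insert a S := by
        ext x; simp [or_comm, or_assoc]
      calc δ T ≤ δ (T ∪ S) := ih T
        _ ≤ δ (T ∪ S ∪ {a}) := step
        _ = δ (T ∪ insert a S) := by rw [heq]
  calc δ A ≤ δ (A ∪ B) := key B A
    _ = δ B := by rw [Finset.union_eq_right.mpr hAB]

end Aux

/-- Corollary 6.3: `δ ↦ D_δ` is a bijection from the set of diversities on `Y`
onto the set of symmetric maps on pairs of nonempty subsets of `Y`
satisfying (A1)--(A3). -/
theorem stmt_13 {Y : Type*} [Fintype Y] [DecidableEq Y] :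
    let NE := {A : Finset Y // A.Nonempty}
    let un : NE → NE → NE := fun A B => ⟨A.1 ∪ B.1, A.2.inl⟩
    let Div : Set (Finset Y → ℝ) :=
      {δ | (∀ A C B : Finset Y, B.Nonempty → δ (A ∪ C) ≤ δ (A ∪ B) + δ (B ∪ C)) ∧
        ∀ A : Finset Y, A.card ≤ 1 → δ A = 0}
    let Good : Set (NE → NE → ℝ) :=
      {D | (∀ A B, D A B = D B A) ∧
        (∀ A B C, D A C ≤ D A B + D B C) ∧
        (∀ x : Y, D ⟨{x}, Finset.singleton_nonempty x⟩
            ⟨{x}, Finset.singleton_nonempty x⟩ = 0) ∧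
        (∀ A B, A ≠ B → D A B = D (un A B) (un A B) / 2)}
    let F : (Finset Y → ℝ) → NE → NE → ℝ :=
      fun δ A B => if A = B then 2 * δ A.1 else δ (A.1 ∪ B.1)
    Set.BijOn F Div Good := by
  intro NE un Div Good F
  refine ⟨?_, ?_, ?_⟩
  · -- MapsTo
    intro δ hδ
    obtain ⟨h1, h2⟩ := hδ
    have hnn : ∀ A : Finset Y, 0 ≤ δ A := div_nonneg' h1 h2
    have hmono : ∀ {A B : Finset Y}, A ⊆ B → δ A ≤ δ B := fun h => div_mono' h1 h2 h
    have Fself : ∀ A : NE, F δ A A = 2 * δ A.1 := fun A => if_pos rfl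
    have Fne : ∀ A B : NE, A ≠ B → F δ A B = δ (A.1 ∪ B.1) := fun A B h => if_neg h
    refine ⟨?_, ?_, ?_, ?_⟩
    · -- symmetry
      intro A B
      by_cases h : A = B
      · subst h; rfl
      · simp only [F, if_neg h, if_neg (Ne.symm h), Finset.union_comm]
    · -- triangle
      intro A B C
      by_cases hAB : A = B
      · subst hAB
        by_cases hAC : A = C
        · subst hAC; rw [Fself A]; linarith [hnn A.1]
        · rw [Fself A, Fne A C hAC]; linarith [hnn A.1]
      · by_cases hBC : B = C
        · subst hBC
          rw [Fne A B hAB, Fself B]; linarith [hnn B.1]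
        · by_cases hAC : A = C
          · subst hAC
            rw [Fself A, Fne A B hAB, Fne B A hBC]
            have h1' : δ A.1 ≤ δ (A.1 ∪ B.1) := hmono Finset.subset_union_left
            rw [Finset.union_comm B.1 A.1]
            linarith
          · rw [Fne A C hAC, Fne A B hAB, Fne B C hBC]
            exact h1 A.1 C.1 B.1 B.2
    · -- A2
      intro x
      rw [Fself ⟨{x}, Finset.singleton_nonempty x⟩]
      rw [h2 {x} (by simp)]
      ring
    · -- A3
      intro A B hAB
      rw [Fne A B hAB, Fself (un A B)]
      ring
  · -- InjOn
    intro δ hδ δ' hδ' hF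
    funext A
    rcases A.eq_empty_or_nonempty with h | h
    · rw [h, hδ.2 ∅ (by simp), hδ'.2 ∅ (by simp)]
    · have := congrFun (congrFun hF ⟨A, h⟩) ⟨A, h⟩
      simp only [F, if_pos rfl] at this
      linarith
  · -- SurjOn
    intro D hD
    obtain ⟨hsym, htri, hsing, hA3⟩ := hD
    classical
    set δ : Finset Y → ℝ := fun A => if h : A.Nonempty then D ⟨A, h⟩ ⟨A, h⟩ / 2 else 0 with hδdef
    have hδval : ∀ (A : NE), δ A.1 = D A A / 2 := by
      intro A
      simp only [hδdef, dif_pos A.2]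
      rfl
    have hg0 : ∀ (A : NE), 0 ≤ D A A := by
      intro A
      have := htri A A A
      linarith
    have gmono : ∀ (A B : NE), A.1 ⊆ B.1 → D A A ≤ D B B := by
      intro A B hsub
      by_cases h : A = B
      · subst h; exact le_refl _
      · have h3 := hA3 A B h
        have hun : un A B = B := Subtype.ext (Finset.union_eq_right.mpr hsub)
        rw [hun] at h3
        have htr := htri A B A
        have hs := hsym A B
        linarith
    have δmem : δ ∈ Div := by
      constructor
      · intro A C B hB
        by_cases hAC : (A ∪ C).Nonempty
        · have hAB : (A ∪ B).Nonempty := hB.mono Finset.subset_union_right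
          have hBC : (B ∪ C).Nonempty := hB.mono Finset.subset_union_left
          have eP : δ (A ∪ C) = D ⟨A ∪ C, hAC⟩ ⟨A ∪ C, hAC⟩ / 2 := hδval ⟨A ∪ C, hAC⟩
          have eQ : δ (A ∪ B) = D ⟨A ∪ B, hAB⟩ ⟨A ∪ B, hAB⟩ / 2 := hδval ⟨A ∪ B, hAB⟩
          have eR : δ (B ∪ C) = D ⟨B ∪ C, hBC⟩ ⟨B ∪ C, hBC⟩ / 2 := hδval ⟨B ∪ C, hBC⟩
          rw [eP, eQ, eR]
          set P : NE := ⟨A ∪ C, hAC⟩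
          set Q : NE := ⟨A ∪ B, hAB⟩
          set R : NE := ⟨B ∪ C, hBC⟩
          set Bn : NE := ⟨B, hB⟩
          by_cases hAsubB : A ⊆ B
          · have : P.1 ⊆ R.1 := Finset.union_subset_union_left hAsubB
            have := gmono P R this
            linarith [hg0 Q]
          · by_cases hCsubB : C ⊆ B
            · have : P.1 ⊆ Q.1 := Finset.union_subset_union_right hCsubB
              have := gmono P Q this
              linarith [hg0 R]
            · have hQB : Q ≠ Bn := by
                intro h
                exact hAsubB (Finset.union_eq_right.mp (congrArg Subtype.val h))
              have hRB : Bn ≠ R := by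
                intro h
                exact hCsubB (Finset.union_eq_left.mp (congrArg Subtype.val h.symm))
              have e1 : un Q Bn = Q := by
                apply Subtype.ext
                show (A ∪ B) ∪ B = A ∪ B
                rw [Finset.union_assoc, Finset.union_self]
              have e2 : un Bn R = R := by
                apply Subtype.ext
                show B ∪ (B ∪ C) = B ∪ C
                rw [← Finset.union_assoc, Finset.union_self]
              have h3Q := hA3 Q Bn hQB
              rw [e1] at h3Q
              have h3R := hA3 Bn R hRB
              rw [e2] at h3R
              have hPU : P.1 ⊆ (un Q R).1 := by
                intro x hx
                have hx' : x ∈ A ∪ C := hx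
                show x ∈ (A ∪ B) ∪ (B ∪ C)
                simp only [Finset.mem_union] at hx' ⊢
                rcases hx' with hx | hx
                · exact Or.inl (Or.inl hx)
                · exact Or.inr (Or.inr hx)
              have hPUm := gmono P (un Q R) hPU
              by_cases hQR : Q = R
              · have : un Q R = Q := by
                  apply Subtype.ext
                  show Q.1 ∪ R.1 = Q.1
                  rw [← hQR, Finset.union_self]
                rw [this] at hPUm
                rw [← hQR]
                linarith [hg0 Q]
              · have h3QR := hA3 Q R hQR
                have htr := htri Q Bn R
                linarith
        · have e0 : δ (A ∪ C) = 0 := by simp only [hδdef, dif_neg hAC]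
          have hAB : (A ∪ B).Nonempty := hB.mono Finset.subset_union_right
          have hBC : (B ∪ C).Nonempty := hB.mono Finset.subset_union_left
          rw [e0, hδval ⟨A ∪ B, hAB⟩, hδval ⟨B ∪ C, hBC⟩]
          linarith [hg0 ⟨A ∪ B, hAB⟩, hg0 ⟨B ∪ C, hBC⟩]
      · intro A hcard
        rcases A.eq_empty_or_nonempty with h | h
        · simp only [hδdef, h]
          rw [dif_neg (by simp)]
        · have hc1 : A.card = 1 := le_antisymm hcard h.card_pos
          obtain ⟨x, hx⟩ := Finset.card_eq_one.mp hc1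
          subst hx
          have := hδval ⟨{x}, Finset.singleton_nonempty x⟩
          rw [this, hsing x]
          norm_num
    refine ⟨δ, δmem, ?_⟩
    funext A B
    by_cases h : A = B
    · subst h
      simp only [F, if_pos rfl]
      rw [hδval A]
      ring
    · simp only [F, if_neg h]
      have hun : (A.1 ∪ B.1).Nonempty := A.2.inl
      rw [hδval ⟨A.1 ∪ B.1, hun⟩]
      have := hA3 A B h
      rw [this]
end

section
/- Let Y be a finite set, 𝒮 a finite set of splits of Y (a split is an unordered pair {C,D} of nonempty disjoint subsets of Y with C ∪ D = Y), and α : 𝒮 → ℝ with α(S) > 0 for all S ∈ 𝒮. Let δ = δ_{(𝒮,α)} be the split system diversity, defined on A ⊆ Y by δ(A) = ∑ over those S ∈ 𝒮 that split A of α(S), where S = {C,D} splits A iff A ∩ C ≠ ∅ and A ∩ D ≠ ∅. Then P(δ) = P⁻(δ), where P(δ) = {f : 𝒫(Y) → ℝ : f(∅) = 0 and ∑_{A∈𝒜} f(A) ≥ δ(⋃𝒜) for every family 𝒜 ⊆ 𝒫(Y)} and P⁻(δ) = {f : 𝒫(Y) → ℝ : f(∅) = 0 and f(A) + f(B) ≥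 δ(A∪B) for all A, B ⊆ Y}. Consequently the sets of minimal elements (the tight-spans) of the two polyhedra coincide. -/
lemma stmt16_count {Y : Type*} [DecidableEq Y]
    (ℬ : Finset (Finset Y)) (hemp : ∅ ∉ ℬ)
    (C D : Finset Y) (hCD : ∀ A ∈ ℬ, A ⊆ C ∪ D)
    (hUC : ∃ A ∈ ℬ, A ∩ C ≠ ∅) (hUD : ∃ A ∈ ℬ, A ∩ D ≠ ∅) :
    2 * (ℬ.card - 1) ≤
      ∑ A ∈ ℬ, ((ℬ.erase A).filter
        (fun B => (A ∪ B) ∩ C ≠ ∅ ∧ (A ∪ B) ∩ D ≠ ∅)).card := by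
  have hsub : ∀ {A B : Finset Y}, A ∩ C ≠ ∅ → (A ∪ B) ∩ C ≠ ∅ := by
    intro A B h
    obtain ⟨a, ha⟩ := Finset.nonempty_iff_ne_empty.2 h
    exact Finset.nonempty_iff_ne_empty.1
      ⟨a, Finset.mem_inter.2 ⟨Finset.mem_union_left _ (Finset.mem_inter.1 ha).1,
        (Finset.mem_inter.1 ha).2⟩⟩
  have hsub' : ∀ {A B : Finset Y}, A ∩ D ≠ ∅ → (A ∪ B) ∩ D ≠ ∅ := by
    intro A B h
    obtain ⟨a, ha⟩ := Finset.nonempty_iff_ne_empty.2 h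
    exact Finset.nonempty_iff_ne_empty.1
      ⟨a, Finset.mem_inter.2 ⟨Finset.mem_union_left _ (Finset.mem_inter.1 ha).1,
        (Finset.mem_inter.1 ha).2⟩⟩
  have hsubB : ∀ {A B : Finset Y}, B ∩ C ≠ ∅ → (A ∪ B) ∩ C ≠ ∅ := by
    intro A B h
    obtain ⟨a, ha⟩ := Finset.nonempty_iff_ne_empty.2 h
    exact Finset.nonempty_iff_ne_empty.1
      ⟨a, Finset.mem_inter.2 ⟨Finset.mem_union_right _ (Finset.mem_inter.1 ha).1,
        (Finset.mem_inter.1 ha).2⟩⟩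
  have hsubB' : ∀ {A B : Finset Y}, B ∩ D ≠ ∅ → (A ∪ B) ∩ D ≠ ∅ := by
    intro A B h
    obtain ⟨a, ha⟩ := Finset.nonempty_iff_ne_empty.2 h
    exact Finset.nonempty_iff_ne_empty.1
      ⟨a, Finset.mem_inter.2 ⟨Finset.mem_union_right _ (Finset.mem_inter.1 ha).1,
        (Finset.mem_inter.1 ha).2⟩⟩
  -- a set missing C must meet D
  have hmD : ∀ A ∈ ℬ, A ∩ C = ∅ → A ∩ D ≠ ∅ := by
    intro A hA hAC
    have hAne : A.Nonempty := Finset.nonempty_iff_ne_empty.2 (by rintro rfl; exact hemp hA)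
    obtain ⟨a, ha⟩ := hAne
    have haCD := hCD A hA ha
    have haD : a ∈ D := by
      rcases Finset.mem_union.1 haCD with h | h
      · exact absurd (Finset.mem_inter.2 ⟨ha, h⟩) (by simp [hAC])
      · exact h
    exact Finset.nonempty_iff_ne_empty.1 ⟨a, Finset.mem_inter.2 ⟨ha, haD⟩⟩
  by_cases hx : ∃ A0 ∈ ℬ, A0 ∩ C ≠ ∅ ∧ A0 ∩ D ≠ ∅
  · obtain ⟨A0, hA0, hc0, hd0⟩ := hx
    rw [← Finset.add_sum_erase _ _ hA0]
    have h1 : ((ℬ.erase A0).filter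
        (fun B => (A0 ∪ B) ∩ C ≠ ∅ ∧ (A0 ∪ B) ∩ D ≠ ∅)).card = ℬ.card - 1 := by
      rw [Finset.filter_true_of_mem (fun B _ => ⟨hsub hc0, hsub' hd0⟩),
        Finset.card_erase_of_mem hA0]
    have h2 : ℬ.card - 1 ≤ ∑ A ∈ ℬ.erase A0, ((ℬ.erase A).filter
        (fun B => (A ∪ B) ∩ C ≠ ∅ ∧ (A ∪ B) ∩ D ≠ ∅)).card := by
      have : ∀ A ∈ ℬ.erase A0, 1 ≤ ((ℬ.erase A).filter
          (fun B => (A ∪ B) ∩ C ≠ ∅ ∧ (A ∪ B) ∩ D ≠ ∅)).card := by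
        intro A hA
        refine Finset.card_pos.2 ⟨A0, Finset.mem_filter.2 ⟨?_, hsubB hc0, hsubB' hd0⟩⟩
        exact Finset.mem_erase.2 ⟨fun h => (Finset.mem_erase.1 hA).1 h.symm, hA0⟩
      calc ℬ.card - 1 = ∑ _A ∈ ℬ.erase A0, 1 := by
            rw [Finset.sum_const, smul_eq_mul, mul_one, Finset.card_erase_of_mem hA0]
        _ ≤ _ := Finset.sum_le_sum this
    omega
  · push_neg at hx
    set P := ℬ.filter (fun A => A ∩ C ≠ ∅) with hP
    set Q := ℬ.filter (fun A => ¬ A ∩ C ≠ ∅) with hQ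
    have hpq : P.card + Q.card = ℬ.card := Finset.card_filter_add_card_filter_not _
    have hp1 : 1 ≤ P.card := by
      obtain ⟨A, hA, hAC⟩ := hUC
      exact Finset.card_pos.2 ⟨A, Finset.mem_filter.2 (And.intro hA hAC)⟩
    have hq1 : 1 ≤ Q.card := by
      obtain ⟨A, hA, hAD⟩ := hUD
      have hAC : A ∩ C = ∅ := by
        by_contra h
        exact hAD (hx A hA (Finset.nonempty_iff_ne_empty.2 h))
      exact Finset.card_pos.2 ⟨A, Finset.mem_filter.2 ⟨hA, by simp [hAC]⟩⟩
    have hbound : ∀ A ∈ ℬ, ∀ s : Finset (Finset Y),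
        (∀ B ∈ s, B ∈ ℬ.erase A ∧ (A ∪ B) ∩ C ≠ ∅ ∧ (A ∪ B) ∩ D ≠ ∅) →
        s.card ≤ ((ℬ.erase A).filter
          (fun B => (A ∪ B) ∩ C ≠ ∅ ∧ (A ∪ B) ∩ D ≠ ∅)).card := by
      intro A _ s hs
      exact Finset.card_le_card (fun B hB =>
        Finset.mem_filter.2 ⟨(hs B hB).1, (hs B hB).2⟩)
    have hPQ : ∑ A ∈ ℬ, ((ℬ.erase A).filter
        (fun B => (A ∪ B) ∩ C ≠ ∅ ∧ (A ∪ B) ∩ D ≠ ∅)).card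
        ≥ P.card * Q.card + Q.card * P.card := by
      rw [← Finset.sum_filter_add_sum_filter_not ℬ (fun A => A ∩ C ≠ ∅), ← hP, ← hQ]
      have hPside : ∀ A ∈ P, Q.card ≤ ((ℬ.erase A).filter
          (fun B => (A ∪ B) ∩ C ≠ ∅ ∧ (A ∪ B) ∩ D ≠ ∅)).card := by
        intro A hA
        obtain ⟨hAB, hAC⟩ := Finset.mem_filter.1 hA
        refine hbound A hAB Q ?_
        intro B hB
        obtain ⟨hBB, hBC⟩ := Finset.mem_filter.1 hB
        simp only [not_not] at hBC
        refine ⟨Finset.mem_erase.2 ⟨fun h => hAC (h ▸ hBC), hBB⟩,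
          hsub hAC, hsubB' (hmD B hBB hBC)⟩
      have hQside : ∀ A ∈ Q, P.card ≤ ((ℬ.erase A).filter
          (fun B => (A ∪ B) ∩ C ≠ ∅ ∧ (A ∪ B) ∩ D ≠ ∅)).card := by
        intro A hA
        obtain ⟨hAB, hAC⟩ := Finset.mem_filter.1 hA
        simp only [not_not] at hAC
        refine hbound A hAB P ?_
        intro B hB
        obtain ⟨hBB, hBC⟩ := Finset.mem_filter.1 hB
        refine ⟨Finset.mem_erase.2 ⟨fun h => hBC (h ▸ hAC), hBB⟩,
          hsubB hBC, hsub' (hmD A hAB hAC)⟩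
      calc P.card * Q.card + Q.card * P.card
          = (∑ _A ∈ P, Q.card) + ∑ _A ∈ Q, P.card := by
            rw [Finset.sum_const, Finset.sum_const, smul_eq_mul, smul_eq_mul]
        _ ≤ _ := add_le_add (Finset.sum_le_sum hPside) (Finset.sum_le_sum hQside)
    have harith : 2 * (P.card + Q.card - 1) ≤ P.card * Q.card + Q.card * P.card := by
      obtain ⟨p', hp'⟩ := Nat.exists_eq_add_of_le hp1
      obtain ⟨q', hq'⟩ := Nat.exists_eq_add_of_le hq1
      rw [hp', hq']
      have e : (1 + p') * (1 + q') + (1 + q') * (1 + p')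
          = 2 * (1 + p' + q') + 2 * (p' * q') := by ring
      rw [e]
      generalize p' * q' = m
      omega
    omega

theorem stmt16_main {Y : Type*} [Fintype Y] [DecidableEq Y]
    (𝒮 : Finset (Finset Y × Finset Y))
    (h𝒮 : ∀ S ∈ 𝒮, S.1.Nonempty ∧ S.2.Nonempty ∧ Disjoint S.1 S.2 ∧
      S.1 ∪ S.2 = Finset.univ)
    (α : Finset Y × Finset Y → ℝ) (hα : ∀ S ∈ 𝒮, 0 < α S)
    (δ : Finset Y → ℝ)
    (hδ : ∀ A : Finset Y,
      δ A = ∑ S ∈ 𝒮, if A ∩ S.1 ≠ ∅ ∧ A ∩ S.2 ≠ ∅ then α S else 0)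
    (f : Finset Y → ℝ) (hf0 : f ∅ = 0)
    (hf : ∀ A B : Finset Y, δ (A ∪ B) ≤ f A + f B)
    (𝒜 : Finset (Finset Y)) : δ (𝒜.sup id) ≤ ∑ A ∈ 𝒜, f A := by
  have hδ0 : ∀ A, 0 ≤ δ A := by
    intro A
    rw [hδ]
    apply Finset.sum_nonneg
    intro S hS
    split
    · exact (hα S hS).le
    · exact le_rfl
  have hδempty : δ ∅ = 0 := by
    rw [hδ]
    apply Finset.sum_eq_zero
    intro S _
    simp
  -- reduce to the family without the empty set
  set ℬ := 𝒜.erase ∅ with hB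
  have hsup : ℬ.sup id = 𝒜.sup id := Finset.sup_erase_bot 𝒜
  have hsum : ∑ A ∈ ℬ, f A = ∑ A ∈ 𝒜, f A := by
    by_cases h : (∅ : Finset Y) ∈ 𝒜
    · exact Finset.sum_erase _ hf0
    · rw [hB, Finset.erase_eq_of_notMem h]
  rw [← hsup, ← hsum]
  have hemp : (∅ : Finset Y) ∉ ℬ := Finset.notMem_erase _ _
  clear_value ℬ
  clear hsup hsum hB
  -- small cases
  rcases Nat.lt_or_ge ℬ.card 2 with hn | hn
  · interval_cases h : ℬ.card
    · rw [Finset.card_eq_zero.1 h]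
      simp [hδempty]
    · obtain ⟨A, rfl⟩ := Finset.card_eq_one.1 h
      have := hf A ∅
      simp only [Finset.union_empty, hf0, add_zero] at this
      simpa using this
  -- main case : |ℬ| ≥ 2
  set n := ℬ.card with hn'
  set U := ℬ.sup id with hU
  set Sig := ∑ A ∈ ℬ, f A with hSig
  set c : ℝ := 2 * ((n : ℝ) - 1) with hc
  have hcpos : 0 < c := by
    rw [hc]
    have : (2 : ℝ) ≤ (n : ℝ) := by exact_mod_cast hn
    linarith
  -- the three-step chain
  have step3 : ∑ A ∈ ℬ, ∑ B ∈ ℬ.erase A, δ (A ∪ B) ≤ c * Sig := by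
    have hinner : ∀ A ∈ ℬ, ∑ B ∈ ℬ.erase A, δ (A ∪ B)
        ≤ ((n : ℝ) - 1) * f A + (Sig - f A) := by
      intro A hA
      calc ∑ B ∈ ℬ.erase A, δ (A ∪ B) ≤ ∑ B ∈ ℬ.erase A, (f A + f B) :=
            Finset.sum_le_sum (fun B _ => hf A B)
        _ = ((n : ℝ) - 1) * f A + (Sig - f A) := by
            rw [Finset.sum_add_distrib, Finset.sum_const, Finset.sum_erase_eq_sub hA,
              Finset.card_erase_of_mem hA, nsmul_eq_mul, Nat.cast_sub (by omega),
              Nat.cast_one]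
    calc ∑ A ∈ ℬ, ∑ B ∈ ℬ.erase A, δ (A ∪ B)
        ≤ ∑ A ∈ ℬ, (((n : ℝ) - 1) * f A + (Sig - f A)) := Finset.sum_le_sum hinner
      _ = c * Sig := by
          rw [Finset.sum_add_distrib, ← Finset.mul_sum, Finset.sum_sub_distrib,
            Finset.sum_const, nsmul_eq_mul, ← hSig, ← hn', hc]
          ring
  have step2 : ∑ A ∈ ℬ, ∑ B ∈ ℬ.erase A, δ (A ∪ B)
      = ∑ S ∈ 𝒮, α S * ((∑ A ∈ ℬ, ((ℬ.erase A).filter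
          (fun B => (A ∪ B) ∩ S.1 ≠ ∅ ∧ (A ∪ B) ∩ S.2 ≠ ∅)).card : ℝ)) := by
    calc ∑ A ∈ ℬ, ∑ B ∈ ℬ.erase A, δ (A ∪ B)
        = ∑ A ∈ ℬ, ∑ S ∈ 𝒮, ∑ B ∈ ℬ.erase A,
            (if (A ∪ B) ∩ S.1 ≠ ∅ ∧ (A ∪ B) ∩ S.2 ≠ ∅ then α S else 0) := by
          refine Finset.sum_congr rfl (fun A _ => ?_)
          rw [Finset.sum_comm]
          exact Finset.sum_congr rfl (fun B _ => hδ _)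
      _ = ∑ S ∈ 𝒮, ∑ A ∈ ℬ, ∑ B ∈ ℬ.erase A,
            (if (A ∪ B) ∩ S.1 ≠ ∅ ∧ (A ∪ B) ∩ S.2 ≠ ∅ then α S else 0) :=
          Finset.sum_comm
      _ = _ := by
          refine Finset.sum_congr rfl (fun S _ => ?_)
          rw [Finset.mul_sum]
          refine Finset.sum_congr rfl (fun A _ => ?_)
          rw [← Finset.sum_filter, Finset.sum_const, nsmul_eq_mul, mul_comm]
  have step1 : δ U * c ≤ ∑ S ∈ 𝒮, α S * ((∑ A ∈ ℬ, ((ℬ.erase A).filter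
      (fun B => (A ∪ B) ∩ S.1 ≠ ∅ ∧ (A ∪ B) ∩ S.2 ≠ ∅)).card : ℝ)) := by
    rw [hδ U, Finset.sum_mul]
    refine Finset.sum_le_sum (fun S hS => ?_)
    by_cases hUS : U ∩ S.1 ≠ ∅ ∧ U ∩ S.2 ≠ ∅
    · rw [if_pos hUS]
      have hcount := stmt16_count ℬ hemp S.1 S.2
        (fun A _ => by rw [(h𝒮 S hS).2.2.2]; exact Finset.subset_univ A)
        ?_ ?_
      · have hcast : c ≤ ((∑ A ∈ ℬ, ((ℬ.erase A).filter
            (fun B => (A ∪ B) ∩ S.1 ≠ ∅ ∧ (A ∪ B) ∩ S.2 ≠ ∅)).card : ℕ) : ℝ) := by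
          calc c = ((2 * (n - 1) : ℕ) : ℝ) := by
                rw [hc]
                push_cast [Nat.cast_sub (by omega : 1 ≤ n)]
                ring
            _ ≤ _ := by exact_mod_cast hcount
        push_cast at hcast ⊢
        exact mul_le_mul_of_nonneg_left hcast (hα S hS).le
      · -- some A meets S.1
        obtain ⟨y, hy⟩ := Finset.nonempty_iff_ne_empty.2 hUS.1
        obtain ⟨hyU, hy1⟩ := Finset.mem_inter.1 hy
        obtain ⟨A, hA, hyA⟩ := Finset.mem_sup.1 hyU
        exact ⟨A, hA, Finset.nonempty_iff_ne_empty.1 ⟨y, Finset.mem_inter.2 ⟨hyA, hy1⟩⟩⟩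
      · obtain ⟨y, hy⟩ := Finset.nonempty_iff_ne_empty.2 hUS.2
        obtain ⟨hyU, hy2⟩ := Finset.mem_inter.1 hy
        obtain ⟨A, hA, hyA⟩ := Finset.mem_sup.1 hyU
        exact ⟨A, hA, Finset.nonempty_iff_ne_empty.1 ⟨y, Finset.mem_inter.2 ⟨hyA, hy2⟩⟩⟩
    · rw [if_neg hUS, zero_mul]
      have : (0:ℝ) ≤ ((∑ A ∈ ℬ, ((ℬ.erase A).filter
          (fun B => (A ∪ B) ∩ S.1 ≠ ∅ ∧ (A ∪ B) ∩ S.2 ≠ ∅)).card : ℕ) : ℝ) :=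
        Nat.cast_nonneg _
      push_cast at this
      exact mul_nonneg (hα S hS).le this
  have hfinal : δ U * c ≤ c * Sig := le_trans step1 (step2 ▸ step3)
  rw [mul_comm] at hfinal
  exact le_of_mul_le_mul_left hfinal hcpos


/-- Theorem 7.2: for a split system diversity `δ = δ_{(𝒮,α)}` one has
`P(δ) = P⁻(δ)`, and consequently the tight-spans (sets of minimal elements)
of the two polyhedra coincide. -/
theorem stmt_16 {Y : Type*} [Fintype Y] [DecidableEq Y]
    (𝒮 : Finset (Finset Y × Finset Y))
    (h𝒮 : ∀ S ∈ 𝒮, S.1.Nonempty ∧ S.2.Nonempty ∧ Disjoint S.1 S.2 ∧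
      S.1 ∪ S.2 = Finset.univ)
    (α : Finset Y × Finset Y → ℝ) (hα : ∀ S ∈ 𝒮, 0 < α S)
    (δ : Finset Y → ℝ)
    (hδ : ∀ A : Finset Y,
      δ A = ∑ S ∈ 𝒮, if A ∩ S.1 ≠ ∅ ∧ A ∩ S.2 ≠ ∅ then α S else 0) :
    let P : Set (Finset Y → ℝ) :=
      {f | f ∅ = 0 ∧ ∀ 𝒜 : Finset (Finset Y), δ (𝒜.sup id) ≤ ∑ A ∈ 𝒜, f A}
    let Pm : Set (Finset Y → ℝ) :=
      {f | f ∅ = 0 ∧ ∀ A B : Finset Y, δ (A ∪ B) ≤ f A + f B}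
    P = Pm ∧
      {f | f ∈ P ∧ ∀ g ∈ P, g ≤ f → g = f} =
        {f | f ∈ Pm ∧ ∀ g ∈ Pm, g ≤ f → g = f} := by
  intro P Pm
  have hδ0 : ∀ A, 0 ≤ δ A := by
    intro A
    rw [hδ]
    apply Finset.sum_nonneg
    intro S hS
    split
    · exact (hα S hS).le
    · exact le_rfl
  have hPeq : P = Pm := by
    apply Set.eq_of_subset_of_subset
    · rintro f ⟨hf0, hf⟩
      refine ⟨hf0, fun A B => ?_⟩
      by_cases hAB : A = B
      · subst hAB
        have h1 := hf {A}
        simp only [Finset.sup_singleton, id, Finset.sum_singleton] at h1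
        have h2 : 0 ≤ f A := le_trans (hδ0 A) h1
        rw [Finset.union_self]
        linarith
      · have h1 := hf {A, B}
        rw [Finset.sum_pair hAB] at h1
        have h2 : ({A, B} : Finset (Finset Y)).sup id = A ∪ B := by
          simp [Finset.sup_insert, Finset.sup_singleton]
        rw [h2] at h1
        exact h1
    · rintro f ⟨hf0, hf⟩
      exact ⟨hf0, fun 𝒜 => stmt16_main 𝒮 h𝒮 α hα δ hδ f hf0 hf 𝒜⟩
  exact ⟨hPeq, by rw [hPeq]⟩
end

section
/- Let Y be a finite set, 𝒫 a compatible finite set of partial splits of the set ncP(Y) of nonempty subsets of Y, α : 𝒫 → ℝ with α(P) > 0 for all P ∈ 𝒫, and δ a diversity on Y such that d_δ = d_{(𝒫,α)}, i.e., d_δ(A,B) = ∑_{P∈𝒫} α(P)·d_P(A,B) for all nonempty A, B ⊆ Y. Let {𝒜,𝒝} ∈ 𝒫, A ∈ 𝒜, B ∈ 𝒝, and let A' be a nonempty subset of Y with A' ⊆ A and d_δ(A',B) ≥ d_δ(A,B). Then A' ∈ 𝒜. -/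
/-- Lemma 8.3(a): let `PS` be a compatible set of partial splits of the set of
nonempty subsets of `Y` with positive weights `α`, and `δ` a diversity on `Y`
with `d_δ = d_{(PS,α)}`. If `{cA,cB} ∈ PS`, `A ∈ cA`, `B ∈ cB`, `A' ⊆ A` is
nonempty and `d_δ(A',B) ≥ d_δ(A,B)`, then `A' ∈ cA`. -/
theorem stmt_18 {Y : Type*} [Fintype Y] [DecidableEq Y]
    (PS : Finset (Finset (Finset Y) × Finset (Finset Y)))
    (hsplit : ∀ P ∈ PS, P.1.Nonempty ∧ P.2.Nonempty ∧ Disjoint P.1 P.2 ∧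
      (∀ A ∈ P.1, A ≠ (∅ : Finset Y)) ∧ (∀ B ∈ P.2, B ≠ (∅ : Finset Y)))
    (hcompat : ∀ P ∈ PS, ∀ Q ∈ PS,
      (P.1 ⊆ Q.1 ∧ Q.2 ⊆ P.2) ∨ (P.1 ⊆ Q.2 ∧ Q.1 ⊆ P.2) ∨
        (Q.1 ⊆ P.1 ∧ P.2 ⊆ Q.2) ∨ (Q.2 ⊆ P.1 ∧ P.2 ⊆ Q.1))
    (α : Finset (Finset Y) × Finset (Finset Y) → ℝ) (hα : ∀ P ∈ PS, 0 < α P)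
    (δ : Finset Y → ℝ)
    (hδ1 : ∀ A C B : Finset Y, B.Nonempty → δ (A ∪ C) ≤ δ (A ∪ B) + δ (B ∪ C))
    (hδ2 : ∀ A : Finset Y, A.card ≤ 1 → δ A = 0)
    (dδ : Finset Y → Finset Y → ℝ)
    (hdδ : ∀ A B : Finset Y,
      dδ A B = if A = B then 0 else max 0 (δ (A ∪ B) - δ A - δ B))
    (heq : ∀ A B : Finset Y, A ≠ ∅ → B ≠ ∅ →
      dδ A B = ∑ P ∈ PS, α P *
        (if (A ∈ P.1 ∧ B ∈ P.2) ∨ (A ∈ P.2 ∧ B ∈ P.1) then 1 else 0))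
    (cA cB : Finset (Finset Y)) (hP : (cA, cB) ∈ PS)
    (A : Finset Y) (hA : A ∈ cA) (B : Finset Y) (hB : B ∈ cB)
    (A' : Finset Y) (hA' : A' ≠ ∅) (hsub : A' ⊆ A)
    (hge : dδ A B ≤ dδ A' B) :
    A' ∈ cA := by
  by_cases hAA : A' = A
  · exact hAA ▸ hA
  by_contra h
  obtain ⟨hcAne, hcBne, hdisj, hne1, hne2⟩ := hsplit (cA, cB) hP
  have hAne : A ≠ ∅ := hne1 A hA
  have hBne : B ≠ ∅ := hne2 B hB
  -- δ is nonnegative on nonempty sets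
  have hδnn : ∀ S : Finset Y, S ≠ ∅ → 0 ≤ δ S := by
    intro S hS
    obtain ⟨b, hb⟩ := Finset.nonempty_iff_ne_empty.mpr hS
    have h1 := hδ1 S S {b} (Finset.singleton_nonempty b)
    have hu : S ∪ {b} = S := Finset.union_eq_left.mpr (by simp [hb])
    have hu' : ({b} : Finset Y) ∪ S = S := Finset.union_eq_right.mpr (by simp [hb])
    rw [Finset.union_self, hu, hu'] at h1
    linarith
  -- d(A', A) = 0
  have hdA'A : dδ A' A = 0 := by
    rw [hdδ, if_neg hAA, Finset.union_eq_right.mpr hsub]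
    have := hδnn A' hA'
    have hle : δ A - δ A' - δ A ≤ 0 := by linarith
    exact max_eq_left hle
  have hsum0 : ∑ P ∈ PS, α P *
      (if (A' ∈ P.1 ∧ A ∈ P.2) ∨ (A' ∈ P.2 ∧ A ∈ P.1) then 1 else 0) = 0 := by
    rw [← heq A' A hA' hAne, hdA'A]
  -- no split in PS separates A' from A
  have hnosep : ∀ P ∈ PS, ¬ ((A' ∈ P.1 ∧ A ∈ P.2) ∨ (A' ∈ P.2 ∧ A ∈ P.1)) := by
    intro P hPm hcon
    have hterm : ∀ Q ∈ PS, 0 ≤ α Q *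
        (if (A' ∈ Q.1 ∧ A ∈ Q.2) ∨ (A' ∈ Q.2 ∧ A ∈ Q.1) then 1 else 0) := by
      intro Q hQ
      have := (hα Q hQ).le
      have : (0:ℝ) ≤ (if (A' ∈ Q.1 ∧ A ∈ Q.2) ∨ (A' ∈ Q.2 ∧ A ∈ Q.1) then (1:ℝ) else 0) := by
        split <;> norm_num
      exact mul_nonneg (hα Q hQ).le this
    have hz := (Finset.sum_eq_zero_iff_of_nonneg hterm).mp hsum0 P hPm
    rw [if_pos hcon, mul_one] at hz
    exact absurd hz (ne_of_gt (hα P hPm))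
  -- every split separating A' from B separates A from B
  have hkey : ∀ P ∈ PS, ((A' ∈ P.1 ∧ B ∈ P.2) ∨ (A' ∈ P.2 ∧ B ∈ P.1)) →
      ((A ∈ P.1 ∧ B ∈ P.2) ∨ (A ∈ P.2 ∧ B ∈ P.1)) := by
    intro P hPm hsep
    obtain ⟨-, -, hdisjP, -, -⟩ := hsplit P hPm
    rcases hcompat P hPm (cA, cB) hP with ⟨h1, h2⟩ | ⟨h1, h2⟩ | ⟨h1, h2⟩ | ⟨h1, h2⟩
    · rcases hsep with ⟨ha, hb⟩ | ⟨ha, hb⟩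
      · exact absurd (h1 ha) h
      · exact absurd hB (Finset.disjoint_left.mp hdisj (h1 hb))
    · rcases hsep with ⟨ha, hb⟩ | ⟨ha, hb⟩
      · exact absurd (Or.inl ⟨ha, h2 hA⟩) (hnosep P hPm)
      · exact Or.inr ⟨h2 hA, hb⟩
    · rcases hsep with ⟨ha, hb⟩ | ⟨ha, hb⟩
      · exact Or.inl ⟨h1 hA, hb⟩
      · exact absurd (Or.inr ⟨ha, h1 hA⟩) (hnosep P hPm)
    · rcases hsep with ⟨ha, hb⟩ | ⟨ha, hb⟩
      · exact absurd (h1 hB) (Finset.disjoint_right.mp hdisjP hb)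
      · exact absurd (h2 ha) h
  -- strict inequality d(A',B) < d(A,B), contradiction
  have hlt : dδ A' B < dδ A B := by
    rw [heq A' B hA' hBne, heq A B hAne hBne]
    apply Finset.sum_lt_sum
    · intro P hPm
      by_cases hsep : (A' ∈ P.1 ∧ B ∈ P.2) ∨ (A' ∈ P.2 ∧ B ∈ P.1)
      · rw [if_pos hsep, if_pos (hkey P hPm hsep)]
      · rw [if_neg hsep, mul_zero]
        have : (0:ℝ) ≤ (if (A ∈ P.1 ∧ B ∈ P.2) ∨ (A ∈ P.2 ∧ B ∈ P.1) then (1:ℝ) else 0) := by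
          split <;> norm_num
        exact mul_nonneg (hα P hPm).le this
    · refine ⟨(cA, cB), hP, ?_⟩
      have hs1 : ¬ ((A' ∈ (cA, cB).1 ∧ B ∈ (cA, cB).2) ∨
          (A' ∈ (cA, cB).2 ∧ B ∈ (cA, cB).1)) := by
        rintro (⟨ha, -⟩ | ⟨-, hb⟩)
        · exact h ha
        · exact absurd hB (Finset.disjoint_left.mp hdisj hb)
      rw [if_neg hs1, if_pos (Or.inl ⟨hA, hB⟩), mul_zero, mul_one]
      exact hα _ hP
  exact absurd hge (not_le.mpr hlt)
end
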